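/- Let X̄ₙ be the mean of n i.i.d. Bernoulli(μ) random variables. Then for any δ ∈ (0,1), P(μ ≥ X̄ₙ + √(log(1/δ)/(2n))) ≤ δ. -/

import Mathlib

open MeasureTheory ProbabilityTheory

/-- The Bernoulli(p) distribution on ℝ: mass `p` at `1` and `1−p` at `0`. -/
noncomputable def bernoulliReal (p : ℝ) : Measure ℝ :=
  ENNReal.ofReal p • Measure.dirac 1 + ENNReal.ofReal (1 - p) • Measure.dirac 0

open Real in
lemma hoeff_core {m : ℝ} (hm0 : 0 ≤ m) (hm1 : m ≤ 1) {t : ℝ} (ht : t ≤ 0) :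
    m * exp t + (1 - m) ≤ exp (m * t + t ^ 2 / 8) := by
  rcases eq_or_lt_of_le hm0 with h0 | h0
  · rw [← h0]
    simp only [zero_mul, sub_zero, zero_add, one_mul, zero_add]
    exact Real.one_le_exp (by positivity)
  rcases eq_or_lt_of_le hm1 with h1 | h1
  · subst h1
    simp only [one_mul, sub_self, add_zero]
    apply exp_le_exp.2; nlinarith [sq_nonneg t]
  -- 0 < m < 1
  set D : ℝ → ℝ := fun t => m * exp t + (1 - m) with hD
  have hDpos : ∀ x : ℝ, 0 < D x := fun x => by
    have := exp_pos x; simp only [hD]; nlinarith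
  set φ : ℝ → ℝ := fun t => m * t + t ^ 2 / 8 - log (D t) with hφ
  set ψ : ℝ → ℝ := fun t => m + t / 4 - m * exp t / D t with hψ
  have hDd : ∀ x : ℝ, HasDerivAt D (m * exp x) x := fun x => by
    simpa [hD] using ((hasDerivAt_exp x).const_mul m).add_const (1 - m)
  have hφd : ∀ x : ℝ, HasDerivAt φ (ψ x) x := fun x => by
    have h1 : HasDerivAt (fun t => m * t + t ^ 2 / 8) (m + x / 4) x := by
      have := ((hasDerivAt_pow 2 x).div_const 8).const_add 0
      have h2 : HasDerivAt (fun t : ℝ => m * t) m x := by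
        simpa using (hasDerivAt_id x).const_mul m
      have h3 := h2.add ((hasDerivAt_pow 2 x).div_const 8)
      convert h3 using 1
      · rfl
      · rfl
      · rfl
      · norm_num; ring
    have h2 : HasDerivAt (fun t => log (D t)) (m * exp x / D x) x :=
      (hDd x).log (hDpos x).ne'
    have := h1.sub h2
    convert this using 2
    · rfl
    · rfl
    · rfl
  have hψd : ∀ x : ℝ, HasDerivAt ψ (1 / 4 - (m * exp x * (1 - m)) / (D x) ^ 2) x := fun x => by
    have h1 : HasDerivAt (fun t : ℝ => m + t / 4) (1 / 4) x := by
      simpa using ((hasDerivAt_id x).div_const 4).const_add m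
    have h2 : HasDerivAt (fun t => m * exp t / D t)
        ((m * exp x * D x - m * exp x * (m * exp x)) / (D x) ^ 2) x :=
      ((hasDerivAt_exp x).const_mul m).div (hDd x) (hDpos x).ne'
    have := h1.sub h2
    convert this using 1
    · rfl
    · rfl
    · rfl
    have hDx := (hDpos x).ne'
    field_simp
    ring_nf
    simp only [hD]
    ring
  have hψmono : Monotone ψ := by
    apply monotone_of_deriv_nonneg (fun x => (hψd x).differentiableAt)
    intro x
    rw [(hψd x).deriv]
    have hq : m * exp x * (1 - m) / D x ^ 2 ≤ 1 / 4 := by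
      rw [div_le_iff₀ (pow_pos (hDpos x) 2)]
      simp only [hD]
      nlinarith [sq_nonneg (m * exp x - (1 - m))]
    linarith
  have hψ0 : ψ 0 = 0 := by simp [hψ, hD]
  have hψle : ∀ x ≤ 0, ψ x ≤ 0 := fun x hx => hψ0 ▸ hψmono hx
  have hanti : AntitoneOn φ (Set.Iic 0) := by
    apply antitoneOn_of_deriv_nonpos (convex_Iic 0)
    · exact fun x _ => ((hφd x).differentiableAt).continuousAt.continuousWithinAt
    · exact fun x hx => ((hφd x).differentiableAt).differentiableWithinAt
    · intro x hx
      rw [(hφd x).deriv]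
      exact hψle x (le_of_lt (by simpa using hx))
  have hφ0 : φ 0 = 0 := by simp [hφ, hD]
  have := hanti (Set.mem_Iic.2 ht) (Set.mem_Iic.2 le_rfl) ht
  rw [hφ0] at this
  have hlog : log (D t) ≤ m * t + t ^ 2 / 8 := by simp only [hφ] at this; linarith
  calc D t = exp (log (D t)) := (exp_log (hDpos t)).symm
  _ ≤ _ := exp_le_exp.2 hlog

lemma integrable_dirac' {f : ℝ → ℝ} (hf : Measurable f) (a : ℝ) :
    Integrable f (Measure.dirac a) := by
  refine (integrable_const (f a)).congr ?_
  rw [Filter.eventuallyEq_iff_exists_mem]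
  exact ⟨{a}, by rw [MeasureTheory.ae_dirac_eq]; exact Filter.mem_pure.2 rfl,
    fun x hx => by simp_all⟩

lemma bern_integrable (p : ℝ) (f : ℝ → ℝ) (hf : Measurable f) :
    Integrable f (bernoulliReal p) := by
  unfold bernoulliReal
  refine Integrable.add_measure ?_ ?_ <;>
    exact (integrable_dirac' hf _).smul_measure ENNReal.ofReal_ne_top

lemma bern_integral (p : ℝ) (hp0 : 0 ≤ p) (hp1 : p ≤ 1) (f : ℝ → ℝ) (hf : Measurable f) :
    ∫ x, f x ∂(bernoulliReal p) = p * f 1 + (1 - p) * f 0 := by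
  unfold bernoulliReal
  rw [integral_add_measure
      ((integrable_dirac' hf _).smul_measure ENNReal.ofReal_ne_top)
      ((integrable_dirac' hf _).smul_measure ENNReal.ofReal_ne_top),
    integral_smul_measure, integral_smul_measure, integral_dirac' f 1 hf.stronglyMeasurable,
    integral_dirac' f 0 hf.stronglyMeasurable,
    ENNReal.toReal_ofReal hp0, ENNReal.toReal_ofReal (by linarith)]
  simp [smul_eq_mul]

open Real in
/-- Hoeffding bound for Bernoulli means: if `X̄ₙ` is the mean of `n` i.i.d. Bernoulli(μ)
variables, then `P(μ ≥ X̄ₙ + √(log(1/δ)/(2n))) ≤ δ` for any `δ ∈ (0,1)`. -/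
theorem stmt14 {Ω : Type*} [MeasurableSpace Ω] (P : Measure Ω) [IsProbabilityMeasure P]
    (n : ℕ) (hn : 1 ≤ n) (μ₀ : ℝ) (hμ0 : 0 ≤ μ₀) (hμ1 : μ₀ ≤ 1)
    (X : Fin n → Ω → ℝ) (hmeas : ∀ i, Measurable (X i))
    (hdist : ∀ i, P.map (X i) = bernoulliReal μ₀)
    (hindep : iIndepFun X P)
    (δ : ℝ) (hδ0 : 0 < δ) (hδ1 : δ < 1) :
    P {ω | μ₀ ≥ (1 / (n : ℝ)) * ∑ i, X i ω + Real.sqrt (Real.log (1 / δ) / (2 * n))}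
      ≤ ENNReal.ofReal δ := by
  have hnpos : (0:ℝ) < n := by exact_mod_cast hn
  set ε : ℝ := Real.sqrt (Real.log (1 / δ) / (2 * n)) with hε
  have hlogpos : 0 ≤ Real.log (1 / δ) := by
    apply Real.log_nonneg
    rw [le_div_iff₀ hδ0]; linarith
  have hε0 : 0 ≤ ε := Real.sqrt_nonneg _
  have hε2 : ε ^ 2 = Real.log (1 / δ) / (2 * n) := by
    rw [hε, sq_sqrt (by positivity)]
  set t : ℝ := -(4 * ε) with hT
  have ht : t ≤ 0 := by simp [hT]; positivity
  have hgm : Measurable fun x : ℝ => exp (t * x) := (measurable_id.const_mul t).exp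
  have h_int_i : ∀ i, Integrable (fun ω => exp (t * X i ω)) P := by
    intro i
    have h1 : Integrable (fun x => exp (t * x)) (P.map (X i)) := by
      rw [hdist i]; exact bern_integrable _ _ hgm
    exact (integrable_map_measure hgm.aestronglyMeasurable
      (hmeas i).aemeasurable).mp h1
  have h_int_sum : Integrable (fun ω => exp (t * (∑ i, X i) ω)) P :=
    hindep.integrable_exp_mul_sum hmeas (fun i _ => h_int_i i)
  have hmgf_i : ∀ i, mgf (X i) P t = μ₀ * exp t + (1 - μ₀) := by
    intro i
    rw [mgf, ← integral_map (hmeas i).aemeasurable hgm.aestronglyMeasurable, hdist i,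
      bern_integral μ₀ hμ0 hμ1 _ hgm]
    simp
  have hmgf_sum : mgf (∑ i, X i) P t = (μ₀ * exp t + (1 - μ₀)) ^ n := by
    rw [hindep.mgf_sum hmeas]
    simp [hmgf_i]
  -- event rewrite
  have hset : {ω | μ₀ ≥ (1 / (n : ℝ)) * ∑ i, X i ω + ε}
      = {ω | (∑ i, X i) ω ≤ (n : ℝ) * (μ₀ - ε)} := by
    ext ω
    simp only [Set.mem_setOf_eq, ge_iff_le, Finset.sum_apply]
    set s := ∑ i, X i ω with hs
    constructor <;> intro h
    · have h2 : (1 / (n:ℝ)) * s ≤ μ₀ - ε := by linarith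
      calc s = (n:ℝ) * ((1/(n:ℝ)) * s) := by field_simp
      _ ≤ (n:ℝ) * (μ₀ - ε) := mul_le_mul_of_nonneg_left h2 hnpos.le
    · have h2 : (1/(n:ℝ)) * s ≤ (1/(n:ℝ)) * ((n:ℝ) * (μ₀ - ε)) :=
        mul_le_mul_of_nonneg_left h (by positivity)
      have h3 : (1/(n:ℝ)) * ((n:ℝ)*(μ₀-ε)) = μ₀ - ε := by field_simp
      linarith
  have hchern := measure_le_le_exp_mul_mgf (X := ∑ i, X i) (μ := P)
    ((n : ℝ) * (μ₀ - ε)) ht h_int_sum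
  rw [hmgf_sum] at hchern
  have hb : (μ₀ * exp t + (1 - μ₀)) ^ n ≤ exp (μ₀ * t + t ^ 2 / 8) ^ n := by
    apply pow_le_pow_left₀ ?_ (hoeff_core hμ0 hμ1 ht)
    nlinarith [exp_pos t, exp_nonneg t]
  have hkey : exp (-t * ((n : ℝ) * (μ₀ - ε))) * exp (μ₀ * t + t ^ 2 / 8) ^ n ≤ δ := by
    rw [← Real.exp_nat_mul, ← Real.exp_add]
    have harg : -t * ((n : ℝ) * (μ₀ - ε)) + (n : ℝ) * (μ₀ * t + t ^ 2 / 8)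
        = -(2 * n * ε ^ 2) := by rw [hT]; ring
    rw [harg]
    have : 2 * (n : ℝ) * ε ^ 2 = Real.log (1 / δ) := by
      rw [hε2]; field_simp
    rw [this, one_div, Real.log_inv, neg_neg, Real.exp_log hδ0]
  have hfinal : (P {ω | (∑ i, X i) ω ≤ (n : ℝ) * (μ₀ - ε)}).toReal ≤ δ := by
    calc _ ≤ _ := hchern
    _ ≤ δ := le_trans (mul_le_mul_of_nonneg_left hb (exp_nonneg _)) hkey
  rw [hset]
  calc P {ω | (∑ i, X i) ω ≤ (n : ℝ) * (μ₀ - ε)}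
      = ENNReal.ofReal (P {ω | (∑ i, X i) ω ≤ (n : ℝ) * (μ₀ - ε)}).toReal :=
        (ENNReal.ofReal_toReal (measure_ne_top _ _)).symm
  _ ≤ ENNReal.ofReal δ := ENNReal.ofReal_le_ofReal hfinal
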